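/- Let F be a field of characteristic p > 3 containing F_q, q an odd power of p. If x = f/g with f, g coprime polynomials in F[t], y ∈ F(t), and (x, y) lies on y² = x³ + t^q − t, then the polynomials f⁴ − 8fg³(t^q − t) and 4(gf³ + g⁴(t^q − t)) are coprime in F[t]. -/

import Mathlib

open Polynomial

private lemma rm_pow {R : Type*} [CommRing R] [IsDomain R] {P : R[X]} (hP : P ≠ 0)
    (n : ℕ) (α : R) : rootMultiplicity α (P ^ n) = n * rootMultiplicity α P := by
  induction n with
  | zero => simp [rootMultiplicity_eq_zero (show ¬ (1 : R[X]).IsRoot α by simp [IsRoot])]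
  | succ n ih =>
      rw [pow_succ, rootMultiplicity_mul (mul_ne_zero (pow_ne_zero _ hP) hP), ih]
      ring

private lemma deg_spoly {R : Type*} [Field R] {q : ℕ} (hq1 : 1 < q) :
    (X ^ q - X : R[X]).degree = q := by
  rw [Polynomial.degree_sub_eq_left_of_degree_lt, degree_X_pow]
  rw [degree_X_pow, degree_X]
  exact_mod_cast hq1

private lemma spoly_ne {R : Type*} [Field R] {q : ℕ} (hq1 : 1 < q) :
    (X ^ q - X : R[X]) ≠ 0 := by
  intro h0
  have := deg_spoly (R := R) hq1
  rw [h0] at this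
  simp only [degree_zero] at this
  exact absurd this (by simp)

private lemma spoly_der {R : Type*} [Field R] {q : ℕ} (hq : (q : R) = 0) :
    derivative (X ^ q - X : R[X]) = -1 := by
  rw [derivative_sub, derivative_X_pow, derivative_X, hq]
  simp

private lemma spoly_simple {R : Type*} [Field R] {q : ℕ} (hq : (q : R) = 0) (hq1 : 1 < q)
    {α : R} (hroot : (X ^ q - X : R[X]).IsRoot α) :
    rootMultiplicity α (X ^ q - X : R[X]) = 1 := by
  have h0 : (X ^ q - X : R[X]) ≠ 0 := spoly_ne hq1
  have hpos : 0 < rootMultiplicity α (X ^ q - X : R[X]) :=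
    (rootMultiplicity_pos h0).mpr hroot
  have hle : ¬ 1 < rootMultiplicity α (X ^ q - X : R[X]) := by
    intro hlt
    have := ((one_lt_rootMultiplicity_iff_isRoot h0).mp hlt).2
    rw [spoly_der hq] at this
    simp [IsRoot] at this
  omega

theorem duplication_no_cancellation (p c q : ℕ) [Fact p.Prime] (hp3 : 3 < p)
    (hc : Odd c) (hq : q = p ^ c)
    (F : Type*) [Field F] [CharP F p] (φ : GaloisField p c →+* F)
    (f g : Polynomial F) (hg : g ≠ 0) (hfg : IsCoprime f g)
    (x y : RatFunc F)
    (hx : x = algebraMap (Polynomial F) (RatFunc F) f / algebraMap (Polynomial F) (RatFunc F) g)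
    (hxy : y ^ 2 = x ^ 3 + (RatFunc.X ^ q - RatFunc.X)) :
    IsCoprime (f ^ 4 - 8 * f * g ^ 3 * (X ^ q - X))
      (4 * (g * f ^ 3 + g ^ 4 * (X ^ q - X))) := by
  have hp : p.Prime := Fact.out
  have hc0 : c ≠ 0 := by rintro rfl; simp at hc
  have hq1 : 1 < q := by
    rw [hq]
    exact Nat.one_lt_pow hc0 (by omega)
  have hpq : p ∣ q := hq ▸ dvd_pow_self p hc0
  -- the algebraic closure
  set K := AlgebraicClosure F with hK_def
  let φK : F →+* K := algebraMap F K
  haveI hKp : CharP K p := charP_of_injective_algebraMap (algebraMap F K).injective p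
  have hqK : (q : K) = 0 := by
    obtain ⟨r, rfl⟩ := hpq
    push_cast
    exact (CharP.cast_eq_zero_iff K p _).mpr (dvd_mul_right p r)
  -- names
  set s : Polynomial F := X ^ q - X with hs_def
  have hs0 : s ≠ 0 := spoly_ne hq1
  set h : Polynomial F := f ^ 3 + g ^ 3 * s with hh_def
  -- mapped versions
  have hsmap : s.map φK = X ^ q - X := by
    simp [hs_def, Polynomial.map_sub, Polynomial.map_pow, Polynomial.map_X]
  have hmapinj : Function.Injective (Polynomial.map φK) :=
    Polynomial.map_injective φK φK.injective
  have hmapne : ∀ P : Polynomial F, P ≠ 0 → P.map φK ≠ 0 := by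
    intro P hP
    exact fun h0 => hP (hmapinj (by simpa using h0))
  -- h ≠ 0
  have hh : h ≠ 0 := by
    intro h0
    rw [hh_def] at h0
    have hf0 : f ≠ 0 := by
      intro hf0
      rw [hf0] at h0
      exact mul_ne_zero (pow_ne_zero 3 hg) hs0 (by linear_combination h0)
    have heq : (-f) ^ 3 = g ^ 3 * s := by linear_combination -h0
    have heqK : ((-f).map φK) ^ 3 = (g.map φK) ^ 3 * (s.map φK) := by
      have := congrArg (Polynomial.map φK) heq
      simpa [Polynomial.map_mul, Polynomial.map_pow] using this
    -- pick a root of s.map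
    obtain ⟨α, hα⟩ := IsAlgClosed.exists_root (s.map φK)
      (by rw [hsmap, deg_spoly hq1]; simp; omega)
    have hroot : (X ^ q - X : K[X]).IsRoot α := by rwa [← hsmap]
    have hrm := congrArg (rootMultiplicity α) heqK
    rw [rm_pow (hmapne _ (neg_ne_zero.mpr hf0)) 3 α,
      rootMultiplicity_mul (mul_ne_zero (pow_ne_zero 3 (hmapne _ hg)) (hmapne _ hs0)),
      rm_pow (hmapne _ hg) 3 α] at hrm
    rw [hsmap, spoly_simple hqK hq1 hroot] at hrm
    omega
  -- key polynomial identity from the curve equation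
  set A := algebraMap (Polynomial F) (RatFunc F) with hA_def
  have hAb : A y.denom ≠ 0 := RatFunc.algebraMap_ne_zero y.denom_ne_zero
  have hAg : A g ≠ 0 := RatFunc.algebraMap_ne_zero hg
  have hkey : y.num ^ 2 * g ^ 3 = y.denom ^ 2 * h := by
    apply IsFractionRing.injective (Polynomial F) (RatFunc F)
    have h1 : (A y.num / A y.denom) ^ 2 = (A f / A g) ^ 3 + A s := by
      rw [RatFunc.num_div_denom, ← hx, hs_def]
      simpa [hA_def, map_sub, map_pow, RatFunc.algebraMap_X] using hxy
    field_simp at h1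
    rw [hh_def]
    simp only [map_mul, map_pow, map_add]
    linear_combination h1
  have ha : y.num ≠ 0 := by
    intro h0
    rw [h0] at hkey
    exact mul_ne_zero (pow_ne_zero 2 y.denom_ne_zero) hh (by linear_combination -hkey)
  -- now the coprimality argument
  by_contra hcop
  set N : Polynomial F := f ^ 4 - 8 * f * g ^ 3 * (X ^ q - X) with hN_def
  set D : Polynomial F := 4 * (g * f ^ 3 + g ^ 4 * (X ^ q - X)) with hD_def
  have hcast : ∀ n : ℕ, ¬ p ∣ n → (n : F) ≠ 0 := by
    intro n hn h0
    exact hn ((CharP.cast_eq_zero_iff F p n).mp h0)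
  have hp4 : ¬ p ∣ 4 := by
    intro hd
    have h2 : p ∣ 2 := hp.dvd_of_dvd_pow (show p ∣ 2 ^ 2 by norm_num; exact hd)
    have := Nat.le_of_dvd (by norm_num) h2
    omega
  have h4F : (4 : F) ≠ 0 := by
    have := hcast 4 hp4
    simpa using this
  have hD0 : D ≠ 0 := by
    rw [hD_def]
    have h4 : (4 : Polynomial F) ≠ 0 := by
      intro h0
      have := congrArg (fun P : Polynomial F => P.coeff 0) h0
      simp at this
      exact h4F (by exact_mod_cast this)
    have : g * f ^ 3 + g ^ 4 * (X ^ q - X) = g * h := by rw [hh_def, hs_def]; ring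
    rw [this]
    exact mul_ne_zero h4 (mul_ne_zero hg hh)
  classical
  have hgcdu : ¬ IsUnit (EuclideanDomain.gcd N D) := fun hu =>
    hcop ((EuclideanDomain.gcd_isUnit_iff).mp hu)
  have hgcd0 : EuclideanDomain.gcd N D ≠ 0 := fun h0 =>
    hD0 (EuclideanDomain.gcd_eq_zero_iff.mp h0).2
  obtain ⟨τ, hτirr, hτdvd⟩ := WfDvdMonoid.exists_irreducible_factor hgcdu hgcd0
  have hτN : τ ∣ N := hτdvd.trans (EuclideanDomain.gcd_dvd_left N D)
  have hτD : τ ∣ D := hτdvd.trans (EuclideanDomain.gcd_dvd_right N D)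
  have hτ : Prime τ := hτirr.prime
  have hunit_cast : ∀ n : ℕ, ¬ p ∣ n → IsUnit ((n : Polynomial F)) := by
    intro n hn
    have : ((n : F)) ≠ 0 := hcast n hn
    have := Polynomial.isUnit_C.mpr (isUnit_iff_ne_zero.mpr this)
    simpa using this
  have hnd : ∀ n : ℕ, ¬ p ∣ n → ¬ τ ∣ (n : Polynomial F) := by
    intro n hn hd
    exact hτirr.not_isUnit (isUnit_of_dvd_unit hd (hunit_cast n hn))
  have hp36 : ¬ p ∣ 36 := by
    intro hd
    have h49 : (36 : ℕ) = 4 * 9 := by norm_num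
    rcases (Nat.Prime.dvd_mul hp).mp (h49 ▸ hd) with h1 | h1
    · exact hp4 h1
    · have h3 : p ∣ 3 := hp.dvd_of_dvd_pow (show p ∣ 3 ^ 2 by norm_num; exact h1)
      have := Nat.le_of_dvd (by norm_num) h3
      omega
  -- τ divides f * (g^4 * s)
  have hdvd1 : τ ∣ (36 : ℕ) * (f * (g ^ 4 * s)) := by
    have heq : ((36 : ℕ) : Polynomial F) * (f * (g ^ 4 * s)) = f * D - (4 * g) * N := by
      rw [hN_def, hD_def, hs_def]; push_cast; ring
    rw [heq]
    exact dvd_sub (hτD.mul_left f) (hτN.mul_left (4 * g))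
  have hτg : ¬ τ ∣ g := by
    intro hτg
    have hτf4 : τ ∣ f ^ 4 := by
      have : f ^ 4 = N + 8 * f * g ^ 3 * (X ^ q - X) := by rw [hN_def]; ring
      rw [this]
      exact dvd_add hτN (((hτg.trans (dvd_pow_self g (by norm_num))).mul_left (8 * f)).mul_right _)
    have hτf : τ ∣ f := hτ.dvd_of_dvd_pow hτf4
    exact hτirr.not_isUnit (hfg.isUnit_of_dvd' hτf hτg)
  have hτfs : τ ∣ f ∧ τ ∣ s := by
    rcases hτ.2.2 _ _ hdvd1 with h1 | h1
    · exact absurd h1 (hnd 36 hp36)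
    rcases hτ.2.2 _ _ h1 with h2 | h2
    · -- τ ∣ f ; derive τ ∣ s
      refine ⟨h2, ?_⟩
      have hτgh : τ ∣ g * h := by
        have heq : ((4 : ℕ) : Polynomial F) * (g * h) = D := by
          rw [hD_def, hh_def, hs_def]; push_cast; ring
        have hdv : τ ∣ ((4 : ℕ) : Polynomial F) * (g * h) := by rw [heq]; exact hτD
        rcases hτ.2.2 _ _ hdv with h3 | h3
        · exact absurd h3 (hnd 4 hp4)
        · exact h3
      have hτh : τ ∣ h := (hτ.2.2 _ _ hτgh).resolve_left hτg
      have hτg3s : τ ∣ g ^ 3 * s := by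
        have : g ^ 3 * s = h - f ^ 3 := by rw [hh_def]; ring
        rw [this]
        exact dvd_sub hτh (h2.trans (dvd_pow_self f (by norm_num)))
      rcases hτ.2.2 _ _ hτg3s with h3 | h3
      · exact absurd (hτ.dvd_of_dvd_pow h3) hτg
      · exact h3
    rcases hτ.2.2 _ _ h2 with h3 | h3
    · exact absurd (hτ.dvd_of_dvd_pow h3) hτg
    · -- τ ∣ s ; derive τ ∣ f
      refine ⟨?_, h3⟩
      have hτf4 : τ ∣ f ^ 4 := by
        have : f ^ 4 = N + 8 * f * g ^ 3 * s := by rw [hN_def, hs_def]; ring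
        rw [this]
        exact dvd_add hτN (h3.mul_left _)
      exact hτ.dvd_of_dvd_pow hτf4
  obtain ⟨hτf, hτs⟩ := hτfs
  -- get a root of τ in K
  obtain ⟨α, hα⟩ := IsAlgClosed.exists_root (τ.map φK) (by
    rw [Polynomial.degree_map]
    exact (Polynomial.degree_pos_of_irreducible hτirr).ne')
  have hτα : (τ.map φK).eval α = 0 := hα
  have hfα : (f.map φK).eval α = 0 := by
    obtain ⟨w, hw⟩ := hτf
    rw [hw, Polynomial.map_mul, eval_mul, hτα, zero_mul]
  have hsα : (s.map φK).eval α = 0 := by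
    obtain ⟨w, hw⟩ := hτs
    rw [hw, Polynomial.map_mul, eval_mul, hτα, zero_mul]
  have hgα : (g.map φK).eval α ≠ 0 := by
    obtain ⟨u, v, huv⟩ := hfg
    intro h0
    have := congrArg (fun P : Polynomial F => (P.map φK).eval α) huv
    simp only [Polynomial.map_add, Polynomial.map_mul, Polynomial.map_one, eval_add,
      eval_mul, eval_one, hfα, h0, mul_zero, add_zero] at this
    exact one_ne_zero this.symm
  -- root multiplicity of h.map at α is 1
  have hhKrepr : h.map φK = (f.map φK) ^ 3 + (g.map φK) ^ 3 * (s.map φK) := by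
    rw [hh_def]
    simp [Polynomial.map_add, Polynomial.map_mul, Polynomial.map_pow]
  have hhK0 : h.map φK ≠ 0 := hmapne _ hh
  have hhroot : (h.map φK).IsRoot α := by
    simp [IsRoot, hhKrepr, hfα, hsα]
  have hsKder : derivative (s.map φK) = -1 := by rw [hsmap]; exact spoly_der hqK
  have hdval : (derivative (h.map φK)).eval α = -((g.map φK).eval α) ^ 3 := by
    rw [hhKrepr]
    rw [derivative_add, derivative_mul, derivative_pow, derivative_pow, hsKder]
    simp [hfα, hsα]
  have hrm_h : rootMultiplicity α (h.map φK) = 1 := by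
    have hpos : 0 < rootMultiplicity α (h.map φK) := (rootMultiplicity_pos hhK0).mpr hhroot
    have hle : ¬ 1 < rootMultiplicity α (h.map φK) := by
      intro hlt
      have hder := ((one_lt_rootMultiplicity_iff_isRoot hhK0).mp hlt).2
      rw [IsRoot, hdval] at hder
      exact pow_ne_zero 3 hgα (by simpa [neg_eq_zero] using hder)
    omega
  -- root multiplicity count
  have hkeyK : (y.num.map φK) ^ 2 * (g.map φK) ^ 3 = (y.denom.map φK) ^ 2 * (h.map φK) := by
    have := congrArg (Polynomial.map φK) hkey
    simpa [Polynomial.map_mul, Polynomial.map_pow] using this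
  have haK : y.num.map φK ≠ 0 := hmapne _ ha
  have hbK : y.denom.map φK ≠ 0 := hmapne _ y.denom_ne_zero
  have hgK : g.map φK ≠ 0 := hmapne _ hg
  have hrm := congrArg (rootMultiplicity α) hkeyK
  rw [rootMultiplicity_mul (mul_ne_zero (pow_ne_zero 2 haK) (pow_ne_zero 3 hgK)),
    rootMultiplicity_mul (mul_ne_zero (pow_ne_zero 2 hbK) hhK0),
    rm_pow haK 2 α, rm_pow hgK 3 α, rm_pow hbK 2 α, hrm_h,
    rootMultiplicity_eq_zero (show ¬ (g.map φK).IsRoot α from hgα)] at hrm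
  omega
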